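/- arXiv:0804.2511 — 9 statements merged into one kernel-verified Lean document; each statement's English description precedes it below -/
import Mathlib

section
/- The combinatorial R map given by the piecewise linear formula x̃_i = x_i + Q_i(x,y) - Q_{i-1}(x,y), ỹ_i = y_i + Q_{i-1}(x,y) - Q_i(x,y) is an involution in the following sense: applying the formula to (x̃, ỹ) ∈ B_l × B_k recovers (y, x), i.e., R ∘ R = id as a map B_k ⊗ B_l → B_k ⊗ B_l (after swapping factors twice). -/
/-- The combinatorial `R` via the piecewise-linear formula:
`Rm x y = (ỹ, x̃)` where `x̃ᵢ = xᵢ + Qᵢ - Q_{i-1}`, `ỹᵢ = yᵢ + Q_{i-1} - Qᵢ`,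
`Q₀(x,y) = min(x₁,y₂)`, `Q₁(x,y) = min(x₂,y₁)`. -/
def Rm (x y : ℤ × ℤ) : (ℤ × ℤ) × (ℤ × ℤ) :=
  ((y.1 + min x.1 y.2 - min x.2 y.1, y.2 + min x.2 y.1 - min x.1 y.2),
   (x.1 + min x.2 y.1 - min x.1 y.2, x.2 + min x.1 y.2 - min x.2 y.1))

/-- the combinatorial R given by the piecewise linear formula is an
involution: applying the formula to the image pair recovers `(x, y)`,
i.e. `R ∘ R = id` (after swapping factors twice). -/
theorem combinatorial_R_involution
    (x y : ℤ × ℤ)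
    (hx1 : 0 ≤ x.1) (hx2 : 0 ≤ x.2) (hy1 : 0 ≤ y.1) (hy2 : 0 ≤ y.2) :
    Rm (Rm x y).1 (Rm x y).2 = (x, y) := by
  simp only [Rm, Prod.mk.injEq, Prod.ext_iff]
  omega
end

section
/- Let b = b_1 ⊗ ⋯ ⊗ b_L with b_j ∈ B_{λ_j}. Define u_l^{(0)} = u_l = (l,0) ∈ B_l and recursively u_l^{(j)} to be the element carried through by the combinatorial R: u_l^{(j-1)} ⊗ b_j ≅ b_j' ⊗ u_l^{(j)}. Set E_{l,j} = H(u_l^{(j-1)} ⊗ b_j) and E_{0,j} = 0. Then for all l ≥ 1 and all 1 ≤ j ≤ L, E_{l,j} - E_{l-1,j} ∈ {0, 1}. -/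
/-- `Q₀(x,y) = min(x₁,y₂)`. -/
def RQ0 (x y : ℤ × ℤ) : ℤ := min x.1 y.2

/-- `Q₁(x,y) = min(x₂,y₁)`. -/
def RQ1 (x y : ℤ × ℤ) : ℤ := min x.2 y.1

/-- The carrier output of the combinatorial R: `x ⊗ y ≅ ỹ ⊗ x̃`,
`x̃ᵢ = xᵢ + Qᵢ - Q_{i-1}`. -/
def Rcar (x y : ℤ × ℤ) : ℤ × ℤ :=
  (x.1 + RQ1 x y - RQ0 x y, x.2 + RQ0 x y - RQ1 x y)

/-- The passed-down output of the combinatorial R: `ỹᵢ = yᵢ + Q_{i-1} - Qᵢ`. -/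
def Rout (x y : ℤ × ℤ) : ℤ × ℤ :=
  (y.1 + RQ0 x y - RQ1 x y, y.2 + RQ1 x y - RQ0 x y)

/-- The energy function `H(x ⊗ y) = Q₀(x,y)`. -/
def Hfun (x y : ℤ × ℤ) : ℤ := RQ0 x y

/-- The carrier `u_l^{(j)}` obtained by transporting the highest element
`u_l = (l,0)` through the first `j` tensor factors `b 0, …, b (j-1)` of the path. -/
def carrier (b : ℕ → ℤ × ℤ) (l : ℕ) : ℕ → ℤ × ℤ
  | 0 => ((l : ℤ), 0)
  | j + 1 => Rcar (carrier b l j) (b j)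

/-- The local energy `E_{l,j+1} = H(u_l^{(j)} ⊗ b_{j+1})` (0-indexed in `j`). -/
def Eloc (b : ℕ → ℤ × ℤ) (l j : ℕ) : ℤ := Hfun (carrier b l j) (b j)

/-- The conserved quantity `E_l = ∑_{j=1}^L E_{l,j}`. -/
def Esum (b : ℕ → ℤ × ℤ) (L l : ℕ) : ℤ := ∑ j ∈ Finset.range L, Eloc b l j

/-- The `j`-th factor (0-indexed) of the time evolution `T_l(b)`. -/
def Tout (b : ℕ → ℤ × ℤ) (l j : ℕ) : ℤ × ℤ := Rout (carrier b l j) (b j)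

lemma carrier_diff (b : ℕ → ℤ × ℤ) (l : ℕ) (hl : 1 ≤ l) : ∀ j : ℕ,
    ((carrier b l j).1 = (carrier b (l-1) j).1 + 1 ∧
      (carrier b l j).2 = (carrier b (l-1) j).2) ∨
    ((carrier b l j).1 = (carrier b (l-1) j).1 ∧
      (carrier b l j).2 = (carrier b (l-1) j).2 + 1) := by
  intro j
  induction j with
  | zero =>
    left
    refine ⟨?_, rfl⟩
    simp only [carrier]
    omega
  | succ j ih =>
    simp only [carrier, Rcar, RQ0, RQ1]
    rcases ih with ⟨h1, h2⟩ | ⟨h1, h2⟩ <;> rw [h1, h2] <;>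
      rcases lt_or_ge ((carrier b (l-1) j).1) ((b j).2) with h | h <;>
      rcases lt_or_ge ((carrier b (l-1) j).2) ((b j).1) with h' | h' <;>
      · first
        | (left; constructor <;> omega)
        | (right; constructor <;> omega)

/-- for a path `b = b₁ ⊗ ⋯ ⊗ b_L` with `b_j ∈ B_{λ_j}`,
the local energies satisfy `E_{l,j} - E_{l-1,j} ∈ {0,1}` for all `l ≥ 1`
and all `1 ≤ j ≤ L`. -/
theorem local_energy_difference_zero_or_one
    (L : ℕ) (b : ℕ → ℤ × ℤ)
    (hb : ∀ j < L, 0 ≤ (b j).1 ∧ 0 ≤ (b j).2) :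
    ∀ l : ℕ, 1 ≤ l → ∀ j < L,
      Eloc b l j - Eloc b (l - 1) j = 0 ∨ Eloc b l j - Eloc b (l - 1) j = 1 := by
  intro l hl j _
  rcases carrier_diff b l hl j with ⟨h1, _⟩ | ⟨h1, _⟩ <;>
    simp only [Eloc, Hfun, RQ0, h1] <;> omega
end

section
/- With E_{l,j} the local energies of a path b = b_1 ⊗ ⋯ ⊗ b_L as defined via successive application of the combinatorial R with carrier u_l, the sequence E_l := Σ_{j=1}^L E_{l,j} is weakly increasing in l and stabilizes: there exists l_0 such that E_l = E_{l_0} for all l ≥ l_0 (in fact one may take l_0 = Σ_j λ_j). -/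
lemma carrier_succ_l (b : ℕ → ℤ × ℤ) (l j : ℕ) :
    carrier b (l+1) j = ((carrier b l j).1 + 1, (carrier b l j).2) ∨
    carrier b (l+1) j = ((carrier b l j).1, (carrier b l j).2 + 1) := by
  induction j with
  | zero => left; simp [carrier]
  | succ j ih =>
      rcases ih with h | h <;>
        simp only [carrier, Rcar, RQ0, RQ1, h, Prod.mk.injEq] <;> omega

lemma Eloc_mono (b : ℕ → ℤ × ℤ) (l j : ℕ) : Eloc b l j ≤ Eloc b (l+1) j := by
  rcases carrier_succ_l b l j with h | h <;>
    simp only [Eloc, Hfun, RQ0, h] <;> omega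

lemma carrier_bound (L : ℕ) (b : ℕ → ℤ × ℤ)
    (hb : ∀ j < L, 0 ≤ (b j).1 ∧ 0 ≤ (b j).2) (l : ℕ) :
    ∀ j ≤ L, 0 ≤ (carrier b l j).2 ∧ 0 ≤ (carrier b l j).1 ∧
      (l : ℤ) - ∑ k ∈ Finset.range j, ((b k).1 + (b k).2) ≤ (carrier b l j).1 := by
  intro j hj
  induction j with
  | zero => simp [carrier]
  | succ j ih =>
      have hjL : j < L := hj
      have ih' := ih (Nat.le_of_succ_le hj)
      have hbj := hb j hjL
      simp only [carrier, Rcar, RQ0, RQ1]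
      rw [Finset.sum_range_succ]
      omega

lemma Eloc_stable (L : ℕ) (b : ℕ → ℤ × ℤ)
    (hb : ∀ j < L, 0 ≤ (b j).1 ∧ 0 ≤ (b j).2) (l : ℕ)
    (hl : ∑ j ∈ Finset.range L, ((b j).1 + (b j).2) ≤ (l : ℤ)) :
    ∀ j < L, Eloc b l j = (b j).2 := by
  intro j hjL
  have hbd := carrier_bound L b hb l j (le_of_lt hjL)
  have hsplit : ∑ k ∈ Finset.range L, ((b k).1 + (b k).2)
      = (∑ k ∈ Finset.range j, ((b k).1 + (b k).2))
        + ∑ k ∈ Finset.Ico j L, ((b k).1 + (b k).2) :=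
    (Finset.sum_range_add_sum_Ico _ (le_of_lt hjL)).symm
  have htail : (b j).2 ≤ ∑ k ∈ Finset.Ico j L, ((b k).1 + (b k).2) := by
    have hmem : j ∈ Finset.Ico j L := Finset.mem_Ico.mpr ⟨le_refl j, hjL⟩
    have hs : (b j).1 + (b j).2 ≤ ∑ k ∈ Finset.Ico j L, ((b k).1 + (b k).2) := by
      have h := Finset.single_le_sum (f := fun k => (b k).1 + (b k).2)
        (fun k hk => by
          have := hb k (Finset.mem_Ico.mp hk).2
          show 0 ≤ (b k).1 + (b k).2
          omega) hmem
      simpa using h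
    have := hb j hjL
    omega
  simp only [Eloc, Hfun, RQ0]
  omega

/-- the sequence `E_l = ∑_{j=1}^L E_{l,j}` is weakly increasing in `l`
and stabilizes: `E_l = E_{l₀}` for all `l ≥ l₀`, with `l₀ = ∑_j λ_j`. -/
theorem conserved_quantities_increasing_and_stabilize
    (L : ℕ) (b : ℕ → ℤ × ℤ)
    (hb : ∀ j < L, 0 ≤ (b j).1 ∧ 0 ≤ (b j).2) :
    (∀ l : ℕ, Esum b L l ≤ Esum b L (l + 1)) ∧
    (∀ l : ℕ, (∑ j ∈ Finset.range L, ((b j).1 + (b j).2)).toNat ≤ l →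
      Esum b L l = Esum b L (∑ j ∈ Finset.range L, ((b j).1 + (b j).2)).toNat) := by
  constructor
  · intro l
    exact Finset.sum_le_sum fun j _ => Eloc_mono b l j
  · intro l hl
    set S : ℤ := ∑ j ∈ Finset.range L, ((b j).1 + (b j).2) with hS
    have hS0 : 0 ≤ S := Finset.sum_nonneg fun j hj => by
      have := hb j (Finset.mem_range.mp hj); omega
    have hlS : S ≤ (l : ℤ) := by
      have : (S.toNat : ℤ) ≤ (l : ℤ) := by exact_mod_cast hl
      omega
    have hSS : S ≤ (S.toNat : ℤ) := by omega
    have h1 : Esum b L l = ∑ j ∈ Finset.range L, (b j).2 :=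
      Finset.sum_congr rfl fun j hj =>
        Eloc_stable L b hb l hlS j (Finset.mem_range.mp hj)
    have h2 : Esum b L S.toNat = ∑ j ∈ Finset.range L, (b j).2 :=
      Finset.sum_congr rfl fun j hj =>
        Eloc_stable L b hb S.toNat hSS j (Finset.mem_range.mp hj)
    rw [h1, h2]
end

section
/- Let μ = (μ_1, ..., μ_N) be positive integers with distinct values k_1 < ⋯ < k_s, multiplicities m_k, and vacancy numbers p_k = L - 2Σ_i min(k, μ_i), with p_k > 0 for all k < k_s and p_{k_s} ≥ 0. For each k ∈ {k_1,...,k_s}, let J̄_k be the set of weakly increasing integer sequences (J_i^{(k)})_{i∈Z} satisfying the quasi-periodicity J_{i+m_k}^{(k)} = J_i^{(k)} + p_k. Then for any element J̄ ∈ J̄_{k_1} × ⋯ × J̄_{k_s}, there exist an integer d and riggings J with 0 ≤ J_1^{(k)} ≤ ⋯ ≤ J_{m_k}^{(k)} ≤ p_k for each k, such that J̄ is equivalent (under the abelian group generated by the slides σ_l, which act by (J_i^{(k)}) ↦ (J_{i+δ_{l,k}}^{(k)} + 2 min(l,k))) to ι(J) + d, where ι(J) is the quasi-periodic extension of J. 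-/
/-- Auxiliary recursion for `extended_rigging_standard_form`.
`extRigAux s K JB hit r` returns the pair `(t, w)` of tail-sum and target value
for the component `a = s - 1 - r`, constructed downwards from the top component. -/
noncomputable def extRigAux (s : ℕ) (K : ℕ → ℤ) (JB : ℕ → ℤ → ℤ)
    (hit : ℕ → ℤ → ℤ) : ℕ → ℤ × ℤ
  | 0 => (0, JB (s - 1) 0)
  | r + 1 =>
    let prev := extRigAux s K JB hit r
    let w := prev.2 + 2 * (K (s - 1 - r) - K (s - 2 - r)) * prev.1
    (hit (s - 2 - r) w + prev.1, w)

/-- Tail sum `t_j`. -/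
noncomputable def extRigT (s : ℕ) (K : ℕ → ℤ) (JB : ℕ → ℤ → ℤ)
    (hit : ℕ → ℤ → ℤ) (j : ℕ) : ℤ :=
  (extRigAux s K JB hit (s - 1 - j)).1

/-- Target value `w_a`. -/
noncomputable def extRigW (s : ℕ) (K : ℕ → ℤ) (JB : ℕ → ℤ → ℤ)
    (hit : ℕ → ℤ → ℤ) (a : ℕ) : ℤ :=
  (extRigAux s K JB hit (s - 1 - a)).2

lemma extRig_base (s : ℕ) (K : ℕ → ℤ) (JB : ℕ → ℤ → ℤ) (hit : ℕ → ℤ → ℤ) :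
    extRigT s K JB hit (s - 1) = 0 ∧ extRigT s K JB hit s = 0 ∧
      extRigW s K JB hit (s - 1) = JB (s - 1) 0 := by
  have h1 : s - 1 - (s - 1) = 0 := by omega
  have h2 : s - 1 - s = 0 := by omega
  unfold extRigT extRigW
  rw [h1, h2]
  simp [extRigAux]

lemma extRig_step (s : ℕ) (K : ℕ → ℤ) (JB : ℕ → ℤ → ℤ) (hit : ℕ → ℤ → ℤ)
    {a : ℕ} (ha : a + 1 < s) :
    extRigW s K JB hit a
      = extRigW s K JB hit (a + 1)
        + 2 * (K (a + 1) - K a) * extRigT s K JB hit (a + 1) ∧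
    extRigT s K JB hit a
      = hit a (extRigW s K JB hit a) + extRigT s K JB hit (a + 1) := by
  have h1 : s - 1 - a = (s - 2 - a) + 1 := by omega
  have h2 : s - 1 - (a + 1) = s - 2 - a := by omega
  have h3 : s - 2 - (s - 2 - a) = a := by omega
  have h4 : s - 1 - (s - 2 - a) = a + 1 := by omega
  unfold extRigT extRigW
  rw [h1, h2]
  rw [show extRigAux s K JB hit ((s - 2 - a) + 1)
      = (hit (s - 2 - (s - 2 - a))
          ((extRigAux s K JB hit (s - 2 - a)).2
            + 2 * (K (s - 1 - (s - 2 - a)) - K (s - 2 - (s - 2 - a)))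
              * (extRigAux s K JB hit (s - 2 - a)).1)
          + (extRigAux s K JB hit (s - 2 - a)).1,
        (extRigAux s K JB hit (s - 2 - a)).2
          + 2 * (K (s - 1 - (s - 2 - a)) - K (s - 2 - (s - 2 - a)))
            * (extRigAux s K JB hit (s - 2 - a)).1) from rfl]
  rw [h3, h4]
  exact ⟨rfl, rfl⟩

/-- standard form of extended riggings, Prop. 3.9 of [KTT].
Data: distinct row lengths `k₁ < ⋯ < k_s` with multiplicities `m_{k_a} ≥ 1` and
vacancy numbers `p a = L - 2 ∑_b m_b · min(k_a, k_b)`, positive except possibly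
the last one, which is nonnegative.  An extended rigging is a tuple
`J̄ : Fin s → ℤ → ℤ` of weakly increasing biinfinite sequences with
quasi-periodicity `J̄ a (i + m a) = J̄ a i + p a`.  A slide
`σ_{k₁}^{n₁} ⋯ σ_{k_s}^{n_s}` acts on the `a`-th component by shifting the index
by `n a` and adding `∑_j 2 n_j min(k_j, k_a)`.  Claim: every extended rigging is
equivalent under slides to `ι(J) + d` for some `d ∈ ℤ` and some rigging `J` with
`0 ≤ J₁^{(k)} ≤ ⋯ ≤ J_{m_k}^{(k)} ≤ p_k`; since monotonicity and
quasi-periodicity are preserved by slides, this amounts to the slid sequence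
satisfying `0 ≤ K a 1 - d` and `K a (m a) - d ≤ p a` for every `a`. -/
theorem extended_rigging_standard_form
    (s L : ℕ) (hs : 0 < s)
    (k m : Fin s → ℕ)
    (hk : StrictMono k)
    (hkpos : ∀ a, 0 < k a)
    (hm : ∀ a, 0 < m a)
    (p : Fin s → ℤ)
    (hp : ∀ a, p a = (L : ℤ) - 2 * ∑ b, (m b : ℤ) * min (k a : ℤ) (k b : ℤ))
    (hppos : ∀ a : Fin s, (a : ℕ) + 1 < s → 0 < p a)
    (hplast : ∀ a : Fin s, 0 ≤ p a)
    (Jbar : Fin s → ℤ → ℤ)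
    (hmono : ∀ a, Monotone (Jbar a))
    (hqp : ∀ a (i : ℤ), Jbar a (i + (m a : ℤ)) = Jbar a i + p a) :
    ∃ (d : ℤ) (n : Fin s → ℤ),
      ∀ a : Fin s,
        0 ≤ Jbar a (1 + n a) + (∑ j, 2 * n j * min (k j : ℤ) (k a : ℤ)) - d ∧
        Jbar a ((m a : ℤ) + n a) + (∑ j, 2 * n j * min (k j : ℤ) (k a : ℤ)) - d ≤ p a := by
  classical
  -- ℕ-indexed versions of the data
  set K : ℕ → ℤ := fun j => if h : j < s then (k ⟨j, h⟩ : ℤ) else 0 with hKdef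
  set JB : ℕ → ℤ → ℤ := fun a => if h : a < s then Jbar ⟨a, h⟩ else fun _ => 0 with hJBdef
  have hKfin : ∀ j : Fin s, K (j : ℕ) = (k j : ℤ) := by
    intro j; rw [hKdef]; simp [j.isLt]
  have hJBfin : ∀ a : Fin s, JB (a : ℕ) = Jbar a := by
    intro a; rw [hJBdef]; simp [a.isLt]
  have hKmono : ∀ i j : ℕ, i ≤ j → j < s → K i ≤ K j := by
    intro i j hij hj
    have hi : i < s := lt_of_le_of_lt hij hj
    rw [hKdef]
    simp only [dif_pos hi, dif_pos hj]
    exact_mod_cast hk.monotone (show (⟨i, hi⟩ : Fin s) ≤ ⟨j, hj⟩ from hij)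
  -- existence of a "hitting index" for components with positive vacancy
  have hitEx : ∀ (a : ℕ) (v : ℤ), ∃ u : ℤ,
      a + 1 < s → (JB a u ≤ v ∧ v ≤ JB a (u + 1)) := by
    intro a v
    by_cases h : a + 1 < s
    · have ha : a < s := by omega
      set A : Fin s := ⟨a, ha⟩ with hA
      have hP : (1 : ℤ) ≤ p A := hppos A h
      have hJA : JB a = Jbar A := by rw [hJBdef]; simp [ha, hA]
      have iter : ∀ (c : ℕ) (i : ℤ),
          Jbar A (i + (c : ℤ) * (m A : ℤ)) = Jbar A i + (c : ℤ) * p A := by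
        intro c
        induction c with
        | zero => simp
        | succ c ih =>
          intro i
          have h1 : i + ((c : ℕ) + 1 : ℤ) * (m A : ℤ)
              = (i + (c : ℤ) * (m A : ℤ)) + (m A : ℤ) := by ring
          push_cast
          rw [h1, hqp A, ih]
          ring
      have hne : ∃ z : ℤ, Jbar A z ≤ v := by
        set c : ℕ := (Jbar A 0 - v).toNat with hc
        refine ⟨-((c : ℤ) * (m A : ℤ)), ?_⟩
        have h2 := iter c (-((c : ℤ) * (m A : ℤ)))
        have h3 : -((c : ℤ) * (m A : ℤ)) + (c : ℤ) * (m A : ℤ) = 0 := by ring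
        rw [h3] at h2
        have h4 : (Jbar A 0 - v) ≤ (c : ℤ) := Int.self_le_toNat _
        have h5 : (c : ℤ) ≤ (c : ℤ) * p A := by nlinarith [Int.ofNat_nonneg c]
        linarith
      have hbd : ∃ b : ℤ, ∀ z : ℤ, Jbar A z ≤ v → z ≤ b := by
        set c : ℕ := (v - Jbar A 0).toNat + 1 with hc
        refine ⟨(c : ℤ) * (m A : ℤ), ?_⟩
        intro z hz
        by_contra hzb
        push_neg at hzb
        have h2 := iter c 0
        rw [zero_add] at h2
        have h4 : v - Jbar A 0 < (c : ℤ) := by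
          have := Int.self_le_toNat (v - Jbar A 0)
          push_cast [hc]
          omega
        have h5 : (c : ℤ) ≤ (c : ℤ) * p A := by nlinarith [Int.ofNat_nonneg c]
        have h6 : Jbar A ((c : ℤ) * (m A : ℤ)) ≤ Jbar A z := hmono A (le_of_lt hzb)
        linarith
      obtain ⟨u, hu, hmax⟩ := Int.exists_greatest_of_bdd hbd hne
      refine ⟨u, fun _ => ?_⟩
      rw [hJA]
      refine ⟨hu, ?_⟩
      by_contra hle
      push_neg at hle
      have := hmax (u + 1) (le_of_lt hle)
      omega
    · exact ⟨0, fun hh => absurd hh h⟩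
  choose hitF hitSpec using hitEx
  set T : ℕ → ℤ := extRigT s K JB hitF with hTdef
  set W : ℕ → ℤ := extRigW s K JB hitF with hWdef
  set nN : ℕ → ℤ := fun j => T j - T (j + 1) with hnNdef
  set d : ℤ := W 0 + 2 * K 0 * T 0 with hddef
  obtain ⟨hTlast, hTs, hWlast⟩ := extRig_base s K JB hitF
  rw [← hTdef] at hTlast hTs
  rw [← hWdef] at hWlast
  -- the per-component condition
  have hcond : ∀ a : ℕ, a < s → JB a (nN a) ≤ W a ∧ W a ≤ JB a (nN a + 1) := by
    intro a ha
    rcases Nat.lt_or_ge (a + 1) s with h | h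
    · obtain ⟨hW1, hT1⟩ := extRig_step s K JB hitF h
      rw [← hTdef, ← hWdef] at hW1 hT1
      have hn1 : nN a = hitF a (W a) := by
        rw [hnNdef]; simp only; rw [hT1]; ring
      rw [hn1]
      exact hitSpec a (W a) h
    · have ha1 : a = s - 1 := by omega
      subst ha1
      have hn0 : nN (s - 1) = 0 := by
        rw [hnNdef]; simp only
        have : s - 1 + 1 = s := by omega
        rw [this, hTlast, hTs]; ring
      rw [hn0, hWlast]
      constructor
      · exact le_refl _
      · have hsl : s - 1 < s := by omega
        rw [hJBdef]
        simp only [dif_pos hsl]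
        exact hmono _ (by norm_num)
  -- telescoping sums
  have tel : ∀ N : ℕ, ∀ b : ℕ, b ≤ N → ∑ j ∈ Finset.Ico b N, nN j = T b - T N := by
    intro N
    induction N with
    | zero =>
      intro b hb
      have : b = 0 := by omega
      subst this
      simp
    | succ N ih =>
      intro b hb
      rcases Nat.lt_or_ge b (N + 1) with h | h
      · have hbN : b ≤ N := by omega
        rw [Finset.sum_Ico_succ_top hbN, ih b hbN]
        rw [hnNdef]; simp only; ring
      · have : b = N + 1 := by omega
        subst this
        simp
  -- the sum identity
  have sumId : ∀ a : ℕ, a < s →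
      ∑ j ∈ Finset.range s, 2 * nN j * min (K j) (K a) = d - W a := by
    intro a
    induction a with
    | zero =>
      intro _
      have h0 : ∀ j ∈ Finset.range s, 2 * nN j * min (K j) (K 0)
          = 2 * K 0 * nN j := by
        intro j hj
        rw [Finset.mem_range] at hj
        rw [min_eq_right (hKmono 0 j (Nat.zero_le j) hj)]
        ring
      rw [Finset.sum_congr rfl h0, ← Finset.mul_sum, Finset.range_eq_Ico,
        tel s 0 (Nat.zero_le s), hTs, hddef]
      ring
    | succ a ih =>
      intro h1
      have ha : a < s := by omega
      obtain ⟨hW1, _⟩ := extRig_step s K JB hitF h1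
      rw [← hTdef, ← hWdef] at hW1
      have hdiff : ∑ j ∈ Finset.range s,
          (2 * nN j * min (K j) (K (a + 1)) - 2 * nN j * min (K j) (K a))
          = 2 * (K (a + 1) - K a) * T (a + 1) := by
        rw [Finset.range_eq_Ico,
          ← Finset.sum_Ico_consecutive
            (fun j => 2 * nN j * min (K j) (K (a + 1)) - 2 * nN j * min (K j) (K a))
            (Nat.zero_le (a + 1)) (le_of_lt h1)]
        have hz : ∑ j ∈ Finset.Ico 0 (a + 1),
            (2 * nN j * min (K j) (K (a + 1)) - 2 * nN j * min (K j) (K a)) = 0 := by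
          apply Finset.sum_eq_zero
          intro j hj
          rw [Finset.mem_Ico] at hj
          have hja : j ≤ a := by omega
          rw [min_eq_left (hKmono j (a + 1) (by omega) h1),
            min_eq_left (hKmono j a hja ha)]
          ring
        have hz2 : ∑ j ∈ Finset.Ico (a + 1) s,
            (2 * nN j * min (K j) (K (a + 1)) - 2 * nN j * min (K j) (K a))
            = 2 * (K (a + 1) - K a) * T (a + 1) := by
          have he : ∀ j ∈ Finset.Ico (a + 1) s,
              2 * nN j * min (K j) (K (a + 1)) - 2 * nN j * min (K j) (K a)
              = 2 * (K (a + 1) - K a) * nN j := by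
            intro j hj
            rw [Finset.mem_Ico] at hj
            rw [min_eq_right (hKmono (a + 1) j hj.1 hj.2),
              min_eq_right (hKmono a j (by omega) hj.2)]
            ring
          rw [Finset.sum_congr rfl he, ← Finset.mul_sum, tel s (a + 1) (le_of_lt h1),
            hTs]
          ring
        rw [hz, hz2]
        ring
      rw [Finset.sum_sub_distrib, ih ha] at hdiff
      linarith
  -- assemble
  refine ⟨d, fun j => nN (j : ℕ), ?_⟩
  intro a
  have haN : (a : ℕ) < s := a.isLt
  have hS : (∑ j : Fin s, 2 * nN (j : ℕ) * min ((k j : ℕ) : ℤ) ((k a : ℕ) : ℤ))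
      = d - W (a : ℕ) := by
    rw [show (∑ j : Fin s, 2 * nN (j : ℕ) * min ((k j : ℕ) : ℤ) ((k a : ℕ) : ℤ))
        = ∑ j ∈ Finset.range s, 2 * nN j * min (K j) (K (a : ℕ)) from ?_]
    · exact sumId (a : ℕ) haN
    · rw [← Fin.sum_univ_eq_sum_range (fun j => 2 * nN j * min (K j) (K (a : ℕ))) s]
      refine Finset.sum_congr rfl fun j _ => ?_
      rw [hKfin j, hKfin a]
  obtain ⟨hc1, hc2⟩ := hcond (a : ℕ) haN
  rw [hJBfin a] at hc1 hc2
  constructor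
  · rw [hS]
    have h1 : (1 : ℤ) + nN (a : ℕ) = nN (a : ℕ) + 1 := by ring
    rw [h1]
    linarith
  · rw [hS]
    have hq : Jbar a ((m a : ℤ) + nN (a : ℕ)) = Jbar a (nN (a : ℕ)) + p a := by
      rw [add_comm]; exact hqp a _
    rw [hq]
    linarith
end

section
/- The matrix A with entries A_{i,j} = δ_{i,j} p_{μ_i} + 2 min(μ_i, μ_j), where μ_1 < μ_2 < ⋯ < μ_g are positive integers and p_{μ_i} = L - 2 Σ_{j=1}^g min(μ_i, μ_j) with p_{μ_i} > 0 for all i, is symmetric and positive definite. -/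
private lemma sum_indicator_lt (m N : ℕ) (hm : m ≤ N) :
    ∑ k ∈ Finset.range N, (if k < m then (1 : ℝ) else 0) = m := by
  have hfil : (Finset.range N).filter (fun k => k < m) = Finset.range m := by
    ext k; simp; omega
  rw [Finset.sum_ite, Finset.sum_const, Finset.sum_const, hfil]
  simp

private lemma min_cast_eq (a b N : ℕ) (ha : a ≤ N) (hb : b ≤ N) :
    (min (a : ℝ) (b : ℝ)) =
      ∑ k ∈ Finset.range N, (if k < a then (1 : ℝ) else 0) * (if k < b then 1 else 0) := by
  have h : ∀ k, (if k < a then (1 : ℝ) else 0) * (if k < b then 1 else 0)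
      = if k < min a b then 1 else 0 := by
    intro k
    by_cases h1 : k < a <;> by_cases h2 : k < b <;> simp [h1, h2, lt_min_iff]
  rw [Finset.sum_congr rfl fun k _ => h k,
    sum_indicator_lt (min a b) N (le_trans (min_le_left _ _) ha)]
  push_cast
  rfl

/-- the matrix `A_{ij} = δ_{ij} p_{μ_i} + 2 min(μ_i, μ_j)` of the
string center equation, for distinct soliton lengths `μ₁ < ⋯ < μ_g > 0` and
positive vacancy numbers `p_{μ_i} = L - 2 ∑_j min(μ_i, μ_j)`, is symmetric and
positive definite. -/
theorem string_center_matrix_posdef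
    (g L : ℕ) (μ : Fin g → ℕ)
    (hμ : StrictMono μ) (hμpos : ∀ i, 0 < μ i)
    (hp : ∀ i : Fin g, 0 < (L : ℝ) - 2 * ∑ j, min (μ i : ℝ) (μ j : ℝ)) :
    (Matrix.of fun i j : Fin g =>
        (if i = j then (L : ℝ) - 2 * ∑ t, min (μ i : ℝ) (μ t : ℝ) else 0)
          + 2 * min (μ i : ℝ) (μ j : ℝ)).IsSymm ∧
    (Matrix.of fun i j : Fin g =>
        (if i = j then (L : ℝ) - 2 * ∑ t, min (μ i : ℝ) (μ t : ℝ) else 0)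
          + 2 * min (μ i : ℝ) (μ j : ℝ)).PosDef := by
  set p : Fin g → ℝ := fun i => (L : ℝ) - 2 * ∑ t, min (μ i : ℝ) (μ t : ℝ) with hpdef
  set A : Matrix (Fin g) (Fin g) ℝ :=
    Matrix.of fun i j : Fin g =>
        (if i = j then (L : ℝ) - 2 * ∑ t, min (μ i : ℝ) (μ t : ℝ) else 0)
          + 2 * min (μ i : ℝ) (μ j : ℝ) with hAdef
  have hsymm : A.IsSymm := by
    apply Matrix.IsSymm.ext
    intro i j
    rcases eq_or_ne i j with rfl | h
    · rfl
    · simp [hAdef, h, h.symm, min_comm]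
  have hherm : A.IsHermitian := by
    rw [Matrix.IsHermitian, Matrix.conjTranspose_eq_transpose_of_trivial]
    exact hsymm
  refine ⟨hsymm, Matrix.PosDef.of_dotProduct_mulVec_pos hherm ?_⟩
  intro x hx
  set N : ℕ := Finset.univ.sup μ with hN
  have hμle : ∀ i, μ i ≤ N := fun i => Finset.le_sup (Finset.mem_univ i)
  set a : Fin g → ℕ → ℝ := fun i k => if k < μ i then x i else 0 with hadef
  have key : dotProduct (star x) (A.mulVec x)
      = (∑ i, p i * (x i)^2)
        + 2 * ∑ k ∈ Finset.range N, (∑ i, a i k)^2 := by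
    have hA : ∀ i j, A i j = (if i = j then p i else 0) + 2 * min (μ i : ℝ) (μ j : ℝ) := by
      intro i j; rfl
    have expand : dotProduct (star x) (A.mulVec x)
        = ∑ i, ∑ j, (x i * ((if i = j then p i else 0) + 2 * min (μ i : ℝ) (μ j : ℝ)) * x j) := by
      simp only [dotProduct, Matrix.mulVec, star_trivial, Pi.star_apply,
        Finset.mul_sum]
      refine Finset.sum_congr rfl fun i _ => Finset.sum_congr rfl fun j _ => ?_
      rw [hA]; ring
    rw [expand]
    have split : ∀ i : Fin g,
        ∑ j, (x i * ((if i = j then p i else 0) + 2 * min (μ i : ℝ) (μ j : ℝ)) * x j)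
        = p i * (x i)^2 + ∑ j, 2 * min (μ i : ℝ) (μ j : ℝ) * x i * x j := by
      intro i
      have h1 : ∀ j : Fin g,
          (x i * ((if i = j then p i else 0) + 2 * min (μ i : ℝ) (μ j : ℝ)) * x j)
          = (if i = j then p i * x i * x j else 0)
            + 2 * min (μ i : ℝ) (μ j : ℝ) * x i * x j := by
        intro j
        by_cases h : i = j
        · simp [h]; ring
        · simp only [h, if_false, zero_add]; ring
      rw [Finset.sum_congr rfl fun j _ => h1 j, Finset.sum_add_distrib,
        Finset.sum_ite_eq Finset.univ i (fun j => p i * x i * x j)]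
      simp [sq]
      ring_nf
    rw [Finset.sum_congr rfl fun i _ => split i, Finset.sum_add_distrib]
    congr 1
    have h2 : ∀ i j : Fin g, 2 * min (μ i : ℝ) (μ j : ℝ) * x i * x j
        = 2 * ∑ k ∈ Finset.range N, a i k * a j k := by
      intro i j
      rw [min_cast_eq (μ i) (μ j) N (hμle i) (hμle j), Finset.mul_sum, Finset.sum_mul,
        Finset.sum_mul, Finset.mul_sum]
      refine Finset.sum_congr rfl fun k _ => ?_
      by_cases hh1 : k < μ i <;> by_cases hh2 : k < μ j <;> simp [hadef, hh1, hh2] <;> ring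
    have hsq : ∀ k, (∑ i, a i k)^2 = ∑ i, ∑ j, a i k * a j k := by
      intro k; rw [sq, Finset.sum_mul_sum]
    calc ∑ i, ∑ j, 2 * min (μ i : ℝ) (μ j : ℝ) * x i * x j
        = ∑ i, ∑ j, 2 * ∑ k ∈ Finset.range N, a i k * a j k :=
          Finset.sum_congr rfl fun i _ => Finset.sum_congr rfl fun j _ => h2 i j
      _ = 2 * ∑ i, ∑ j, ∑ k ∈ Finset.range N, a i k * a j k := by
          simp only [← Finset.mul_sum]
      _ = 2 * ∑ i, ∑ k ∈ Finset.range N, ∑ j, a i k * a j k := by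
          rw [Finset.sum_congr rfl fun i _ => Finset.sum_comm]
      _ = 2 * ∑ k ∈ Finset.range N, ∑ i, ∑ j, a i k * a j k := by
          rw [Finset.sum_comm]
      _ = 2 * ∑ k ∈ Finset.range N, (∑ i, a i k)^2 := by
          rw [Finset.sum_congr rfl fun k _ => (hsq k).symm]
  rw [key]
  have hxne : ∃ i, x i ≠ 0 := by
    by_contra h
    push_neg at h
    exact hx (funext h)
  obtain ⟨i₀, hi₀⟩ := hxne
  have h1 : 0 < ∑ i, p i * (x i)^2 := by
    refine Finset.sum_pos' (fun i _ => mul_nonneg (le_of_lt (hp i)) (sq_nonneg _)) ?_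
    exact ⟨i₀, Finset.mem_univ i₀, mul_pos (hp i₀) (by positivity)⟩
  have h2 : 0 ≤ 2 * ∑ k ∈ Finset.range N, (∑ i, a i k)^2 := by
    refine mul_nonneg (by norm_num) (Finset.sum_nonneg fun k _ => sq_nonneg _)
  linarith
end

section
/- For the sl_2 combinatorial R computed by the piecewise-linear formula, the Yang–Baxter relation holds on B_k ⊗ B_l ⊗ B_m: (R ⊗ 1)(1 ⊗ R)(R ⊗ 1) = (1 ⊗ R)(R ⊗ 1)(1 ⊗ R) as maps B_k ⊗ B_l ⊗ B_m → B_m ⊗ B_l ⊗ B_k. -/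
/-- `R ⊗ 1` acting on the first two factors of a triple. -/
def R12 (t : (ℤ × ℤ) × (ℤ × ℤ) × (ℤ × ℤ)) : (ℤ × ℤ) × (ℤ × ℤ) × (ℤ × ℤ) :=
  ((Rm t.1 t.2.1).1, (Rm t.1 t.2.1).2, t.2.2)

/-- `1 ⊗ R` acting on the last two factors of a triple. -/
def R23 (t : (ℤ × ℤ) × (ℤ × ℤ) × (ℤ × ℤ)) : (ℤ × ℤ) × (ℤ × ℤ) × (ℤ × ℤ) :=
  (t.1, (Rm t.2.1 t.2.2).1, (Rm t.2.1 t.2.2).2)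

set_option maxHeartbeats 40000000 in
lemma yb_conj1 (x1 x2 y1 y2 z1 z2 : ℤ) :
    z1 + (x1 + x2 ⊓ y1 - x1 ⊓ y2) ⊓ z2 - (x2 + x1 ⊓ y2 - x2 ⊓ y1) ⊓ z1 +
            (y1 + x1 ⊓ y2 - x2 ⊓ y1) ⊓ (z2 + (x2 + x1 ⊓ y2 - x2 ⊓ y1) ⊓ z1 - (x1 + x2 ⊓ y1 - x1 ⊓ y2) ⊓ z2) -
          (y2 + x2 ⊓ y1 - x1 ⊓ y2) ⊓ (z1 + (x1 + x2 ⊓ y1 - x1 ⊓ y2) ⊓ z2 - (x2 + x1 ⊓ y2 - x2 ⊓ y1) ⊓ z1) =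
        z1 + y1 ⊓ z2 - y2 ⊓ z1 + x1 ⊓ (z2 + y2 ⊓ z1 - y1 ⊓ z2) - x2 ⊓ (z1 + y1 ⊓ z2 - y2 ⊓ z1) := by
  omega

set_option maxHeartbeats 40000000 in
lemma yb_conj5 (x1 x2 y1 y2 z1 z2 : ℤ) :
    x1 + x2 ⊓ y1 - x1 ⊓ y2 + (x2 + x1 ⊓ y2 - x2 ⊓ y1) ⊓ z1 - (x1 + x2 ⊓ y1 - x1 ⊓ y2) ⊓ z2 =
      x1 + x2 ⊓ (z1 + y1 ⊓ z2 - y2 ⊓ z1) - x1 ⊓ (z2 + y2 ⊓ z1 - y1 ⊓ z2) +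
          (x2 + x1 ⊓ (z2 + y2 ⊓ z1 - y1 ⊓ z2) - x2 ⊓ (z1 + y1 ⊓ z2 - y2 ⊓ z1)) ⊓ (y1 + y2 ⊓ z1 - y1 ⊓ z2) -
        (x1 + x2 ⊓ (z1 + y1 ⊓ z2 - y2 ⊓ z1) - x1 ⊓ (z2 + y2 ⊓ z1 - y1 ⊓ z2)) ⊓ (y2 + y1 ⊓ z2 - y2 ⊓ z1) := by
  omega

/-- the Yang–Baxter relation
`(R ⊗ 1)(1 ⊗ R)(R ⊗ 1) = (1 ⊗ R)(R ⊗ 1)(1 ⊗ R)` holds on `B_k ⊗ B_l ⊗ B_m`. -/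
theorem yang_baxter
    (x y z : ℤ × ℤ)
    (hx1 : 0 ≤ x.1) (hx2 : 0 ≤ x.2) (hy1 : 0 ≤ y.1) (hy2 : 0 ≤ y.2)
    (hz1 : 0 ≤ z.1) (hz2 : 0 ≤ z.2) :
    R12 (R23 (R12 (x, y, z))) = R23 (R12 (R23 (x, y, z))) := by
  obtain ⟨x1, x2⟩ := x
  obtain ⟨y1, y2⟩ := y
  obtain ⟨z1, z2⟩ := z
  have h1 := yb_conj1 x1 x2 y1 y2 z1 z2
  have h5 := yb_conj5 x1 x2 y1 y2 z1 z2
  simp only [R12, R23, Rm, Prod.mk.injEq]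
  refine ⟨⟨by linarith, by linarith⟩, ⟨by linarith, by linarith⟩, by linarith, by linarith⟩
end

section
/- Let b = b_1 ⊗ ⋯ ⊗ b_L ∈ B_1^{⊗L} and suppose the path T_l(b) (the image of b under the carrier u_l, defined by u_l ⊗ b ≅ T_l(b) ⊗ u_l' via successive applications of combinatorial R) is computed for l ≥ L. Then T_l(b) = T_{l'}(b) for all l, l' ≥ L, i.e., the time evolutions T_l stabilize for large l. -/

lemma carrier_spec (L : ℕ) (b : ℕ → ℤ × ℤ)
    (hb : ∀ j < L, b j = ((1 : ℤ), (0 : ℤ)) ∨ b j = ((0 : ℤ), (1 : ℤ))) :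
    ∀ j ≤ L, ∀ l l' : ℕ, L ≤ l → L ≤ l' →
      (carrier b l j).2 = (carrier b l' j).2 ∧
      (carrier b l j).1 - l = (carrier b l' j).1 - l' ∧
      (l : ℤ) - j ≤ (carrier b l j).1 ∧ 0 ≤ (carrier b l j).2 := by
  intro j
  induction j with
  | zero => intro _ l l' hl hl'; simp [carrier]
  | succ j ih =>
    intro hj l l' hl hl'
    have hjL : j < L := hj
    have H := ih (Nat.le_of_succ_le hj) l l' hl hl'
    have H' := ih (Nat.le_of_succ_le hj) l' l' hl' hl'
    rcases hb j hjL with hbj | hbj <;>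
      simp only [carrier, Rcar, RQ0, RQ1, hbj, Prod.fst, Prod.snd] <;>
      push_cast <;>
      obtain ⟨e1, e2, e3, e4⟩ := H <;>
      obtain ⟨_, _, e5, e6⟩ := H' <;>
      refine ⟨by omega, by omega, by omega, by omega⟩

/-- for a path `b ∈ B₁^{⊗L}` (each factor is `(1,0)` = letter 1
or `(0,1)` = letter 2), the time evolutions `T_l` stabilize for large `l`:
`T_l(b) = T_{l'}(b)` whenever `l, l' ≥ L`. -/
theorem time_evolution_stabilizes
    (L : ℕ) (b : ℕ → ℤ × ℤ)
    (hb : ∀ j < L, b j = ((1 : ℤ), (0 : ℤ)) ∨ b j = ((0 : ℤ), (1 : ℤ))) :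
    ∀ l l' : ℕ, L ≤ l → L ≤ l' → ∀ j < L, Tout b l j = Tout b l' j := by
  intro l l' hl hl' j hj
  have H := carrier_spec L b hb j (le_of_lt hj) l l' hl hl'
  have H' := carrier_spec L b hb j (le_of_lt hj) l' l' hl' hl'
  obtain ⟨e1, e2, e3, e4⟩ := H
  obtain ⟨_, _, e5, e6⟩ := H'
  have hjl : (j : ℤ) < l := by exact_mod_cast lt_of_lt_of_le hj hl
  have hjl' : (j : ℤ) < l' := by exact_mod_cast lt_of_lt_of_le hj hl'
  rcases hb j hj with hbj | hbj <;>
    simp only [Tout, Rout, RQ0, RQ1, hbj, Prod.mk.injEq] <;>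
    constructor <;> omega
end

section
/- For a single-soliton path in B_1^{⊗L}, namely b with b_j = 2 for a ≤ j < a+m and b_j = 1 otherwise (with a+m−1+l ≤ L), applying the time evolution T_l with l ≥ m translates the soliton by m: T_l(b) has b'_j = 2 exactly for a+m ≤ j < a+2m and 1 otherwise. Moreover E_l(b) = min(l, m). -/
/-- a single soliton of length `m` (letters 2 at positions
`a ≤ j < a + m`, 0-indexed, letters 1 elsewhere, with enough room on the
right: `a + m + l ≤ L`) is translated by `m` under the time evolution `T_l`
with `l ≥ m`; moreover the conserved quantity is `E_l(b) = min(l, m)`. -/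
theorem single_soliton_translation
    (L a m l : ℕ) (b : ℕ → ℤ × ℤ)
    (hm : 0 < m) (hl : m ≤ l) (hroom : a + m + l ≤ L)
    (hb : ∀ j : ℕ, b j = if a ≤ j ∧ j < a + m then ((0 : ℤ), (1 : ℤ))
      else ((1 : ℤ), (0 : ℤ))) :
    (∀ j < L, Tout b l j =
      if a + m ≤ j ∧ j < a + 2 * m then ((0 : ℤ), (1 : ℤ)) else ((1 : ℤ), (0 : ℤ))) ∧
    Esum b L l = min (l : ℤ) (m : ℤ) := by
  have hcar : ∀ j : ℕ, carrier b l j =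
      ((l : ℤ) - max 0 (min ((j : ℤ) - a) (min (m : ℤ) ((a : ℤ) + 2 * m - j))),
        max 0 (min ((j : ℤ) - a) (min (m : ℤ) ((a : ℤ) + 2 * m - j)))) := by
    intro j
    induction j with
    | zero =>
      show ((l : ℤ), 0) = _
      rw [Prod.mk.injEq]
      constructor <;> omega
    | succ j ih =>
      show Rcar (carrier b l j) (b j) = _
      rw [ih, hb j]
      split_ifs with h <;>
      · simp only [Rcar, RQ0, RQ1, Prod.mk.injEq]
        push_cast
        constructor <;> omega
  constructor
  · intro j _
    rw [Tout, hcar j, hb j]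
    split_ifs with h h' h' <;>
    · simp only [Rout, RQ0, RQ1, Prod.mk.injEq]
      constructor <;> omega
  · have hEloc : ∀ j : ℕ, Eloc b l j = if a ≤ j ∧ j < a + m then (1 : ℤ) else 0 := by
      intro j
      rw [Eloc, hcar j, hb j, Hfun]
      split_ifs with h <;> · simp only [RQ0]; omega
    have : Esum b L l = ∑ j ∈ Finset.range L,
        (if j ∈ Finset.Ico a (a + m) then (1 : ℤ) else 0) := by
      refine Finset.sum_congr rfl fun j _ => ?_
      rw [hEloc j]
      simp [Finset.mem_Ico]
    rw [Esum.eq_def] at this ⊢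
    rw [this, Finset.sum_ite_mem]
    have hsub : Finset.range L ∩ Finset.Ico a (a + m) = Finset.Ico a (a + m) := by
      apply Finset.inter_eq_right.mpr
      intro x hx
      simp only [Finset.mem_Ico] at hx
      simp only [Finset.mem_range]
      omega
    rw [hsub, Finset.sum_const, Nat.card_Ico, nsmul_eq_mul, mul_one]
    have : a + m - a = m := by omega
    rw [this]
    omega
end

section
/- Let b ∈ B_1^{⊗L} contain solitons of lengths μ_1, ..., μ_N that are well-separated (soliton i occupies positions [a_i, a_i+μ_i) with a_{i+1} ≥ a_i + 2μ_i + μ_{i+1} say, and μ_1 ≥ μ_2 ≥ ⋯ ≥ μ_N ordered left to right decreasingly). Then for every l ≥ 1, the conserved quantity satisfies E_l(b) = Σ_{i=1}^N min(μ_i, l). -/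
section Aux
variable (b : ℕ → ℤ × ℤ) (l : ℕ)

lemma step_vac (j : ℕ) (d : ℤ) (h0 : 0 ≤ d) (h1 : d ≤ (l:ℤ))
    (hc : carrier b l j = ((l:ℤ) - d, d)) (hbj : b j = (1, 0)) :
    carrier b l (j+1) = ((l:ℤ) - max (d-1) 0, max (d-1) 0) ∧ Eloc b l j = 0 := by
  have h : carrier b l (j+1) = Rcar (carrier b l j) (b j) := rfl
  rw [h, hc, hbj]; unfold Eloc Hfun; rw [hc, hbj]; unfold Rcar RQ0 RQ1
  refine ⟨Prod.ext ?_ ?_, ?_⟩ <;> simp <;> omega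

lemma step_sol (j : ℕ) (d : ℤ) (h0 : 0 ≤ d) (h1 : d ≤ (l:ℤ))
    (hc : carrier b l j = ((l:ℤ) - d, d)) (hbj : b j = (0, 1)) :
    carrier b l (j+1) = ((l:ℤ) - min (d+1) l, min (d+1) l) ∧ Eloc b l j = min ((l:ℤ) - d) 1 := by
  have h : carrier b l (j+1) = Rcar (carrier b l j) (b j) := rfl
  rw [h, hc, hbj]; unfold Eloc Hfun; rw [hc, hbj]; unfold Rcar RQ0 RQ1
  refine ⟨Prod.ext ?_ ?_, ?_⟩ <;> simp <;> omega

lemma vac_run (s n : ℕ) (d : ℤ) (h0 : 0 ≤ d) (h1 : d ≤ (l:ℤ))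
    (hc : carrier b l s = ((l:ℤ) - d, d))
    (hv : ∀ j, s ≤ j → j < s + n → b j = (1, 0)) :
    carrier b l (s + n) = ((l:ℤ) - max (d - n) 0, max (d - n) 0) ∧
    (∑ j ∈ Finset.Ico s (s + n), Eloc b l j) = 0 := by
  induction n with
  | zero =>
    refine ⟨?_, by simp⟩
    rw [Nat.add_zero, hc]
    refine Prod.ext ?_ ?_ <;> simp <;> omega
  | succ n ih =>
    obtain ⟨hcn, hsn⟩ := ih (fun j hj hj' => hv j hj (by omega))
    have hst := step_vac b l (s + n) (max (d - n) 0) (by positivity) (by omega) hcn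
      (hv (s + n) (by omega) (by omega))
    refine ⟨?_, ?_⟩
    · rw [show s + (n+1) = (s + n) + 1 by omega, hst.1]
      refine Prod.ext ?_ ?_ <;> simp <;> push_cast <;> omega
    · rw [show s + (n+1) = (s + n) + 1 by omega, Finset.sum_Ico_succ_top (by omega), hsn, hst.2]
      simp

lemma sol_run (s m : ℕ)
    (hc : carrier b l s = ((l:ℤ), 0))
    (hv : ∀ j, s ≤ j → j < s + m → b j = (0, 1)) :
    carrier b l (s + m) = ((l:ℤ) - min (m:ℤ) l, min (m:ℤ) l) ∧
    (∑ j ∈ Finset.Ico s (s + m), Eloc b l j) = min (m:ℤ) (l:ℤ) := by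
  induction m with
  | zero =>
    refine ⟨?_, by simp⟩
    rw [Nat.add_zero, hc]
    refine Prod.ext ?_ ?_ <;> simp <;> omega
  | succ m ih =>
    obtain ⟨hcn, hsn⟩ := ih (fun j hj hj' => hv j hj (by omega))
    have hst := step_sol b l (s + m) (min (m:ℤ) l) (by positivity) (by omega) hcn
      (hv (s + m) (by omega) (by omega))
    refine ⟨?_, ?_⟩
    · rw [show s + (m+1) = (s + m) + 1 by omega, hst.1]
      refine Prod.ext ?_ ?_ <;> simp <;> push_cast <;> omega
    · rw [show s + (m+1) = (s + m) + 1 by omega, Finset.sum_Ico_succ_top (by omega), hsn, hst.2]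
      push_cast; omega

end Aux

theorem conserved_quantity_of_separated_solitons'
    (L N : ℕ) (a μ : ℕ → ℕ) (b : ℕ → ℤ × ℤ)
    (hμpos : ∀ i < N, 0 < μ i)
    (hdec : ∀ i, i + 1 < N → μ (i + 1) ≤ μ i)
    (hsep : ∀ i, i + 1 < N → a i + 2 * μ i + μ (i + 1) ≤ a (i + 1))
    (hin : ∀ i < N, a i + μ i ≤ L)
    (hb : ∀ j : ℕ, b j = if ∃ i < N, a i ≤ j ∧ j < a i + μ i
      then ((0 : ℤ), (1 : ℤ)) else ((1 : ℤ), (0 : ℤ))) :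
    ∀ l : ℕ, 1 ≤ l →
      Esum b L l = ∑ i ∈ Finset.range N, min (μ i : ℤ) (l : ℤ) := by
  intro l hl
  have amono : ∀ i j, i ≤ j → j < N → a i ≤ a j ∧ a i + μ i ≤ a j + μ j := by
    intro i j hij
    induction j, hij using Nat.le_induction with
    | base => intro _; omega
    | succ j hij ih =>
      intro h
      have h1 := ih (by omega)
      have h2 := hsep j (by omega)
      omega
  have hvacb : ∀ j, (∀ i, i < N → j < a i ∨ a i + μ i ≤ j) → b j = (1, 0) := by
    intro j h
    rw [hb j, if_neg]
    rintro ⟨i, hi, h1, h2⟩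
    rcases h i hi with h' | h' <;> omega
  have hsolb : ∀ i, i < N → ∀ j, a i ≤ j → j < a i + μ i → b j = (0, 1) := by
    intro i hi j h1 h2
    rw [hb j, if_pos ⟨i, hi, h1, h2⟩]
  have main : ∀ i, i < N → carrier b l (a i) = ((l:ℤ), 0) ∧
      (∑ j ∈ Finset.Ico 0 (a i), Eloc b l j) = ∑ k ∈ Finset.range i, min (μ k : ℤ) (l:ℤ) := by
    intro i
    induction i with
    | zero =>
      intro h0
      have hv : ∀ j, 0 ≤ j → j < 0 + a 0 → b j = (1, 0) := by
        intro j _ hj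
        refine hvacb j (fun i hi => Or.inl ?_)
        have := amono 0 i (by omega) hi
        omega
      have h := vac_run b l 0 (a 0) 0 le_rfl (by positivity) (by simp [carrier]) hv
      rw [Nat.zero_add] at h
      refine ⟨?_, by rw [h.2]; simp⟩
      rw [h.1]; refine Prod.ext ?_ ?_ <;> simp
    | succ i ih =>
      intro h
      obtain ⟨hc, hs⟩ := ih (by omega)
      have hsolrun := sol_run b l (a i) (μ i) hc (hsolb i (by omega))
      have hgap : a i + μ i ≤ a (i + 1) := by have := hsep i h; omega
      have hv : ∀ j, a i + μ i ≤ j → j < (a i + μ i) + (a (i+1) - (a i + μ i)) → b j = (1, 0) := by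
        intro j h1 h2
        refine hvacb j (fun i' hi' => ?_)
        rcases le_or_gt i' i with hle | hlt
        · exact Or.inr (by have := amono i' i hle (by omega); omega)
        · exact Or.inl (by have := amono (i+1) i' (by omega) hi'; omega)
      have hvacrun := vac_run b l (a i + μ i) (a (i+1) - (a i + μ i)) (min (μ i : ℤ) l)
        (by omega) (by omega) hsolrun.1 hv
      rw [show (a i + μ i) + (a (i+1) - (a i + μ i)) = a (i+1) by omega] at hvacrun
      have hn : ((a (i+1) - (a i + μ i) : ℕ) : ℤ) = (a (i+1) : ℤ) - (a i : ℤ) - (μ i : ℤ) := by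
        push_cast [hgap]; omega
      have hsep' := hsep i h
      constructor
      · rw [hvacrun.1]
        refine Prod.ext ?_ ?_ <;> simp <;> omega
      · rw [← Finset.sum_Ico_consecutive _ (Nat.zero_le (a i + μ i)) hgap,
            ← Finset.sum_Ico_consecutive _ (Nat.zero_le (a i)) (by omega : a i ≤ a i + μ i),
            hs, hsolrun.2, hvacrun.2, Finset.sum_range_succ]
        ring
  rcases Nat.eq_zero_or_pos N with hN | hN
  · subst hN
    have hv : ∀ j, 0 ≤ j → j < 0 + L → b j = (1, 0) := by
      intro j _ _; exact hvacb j (fun i hi => absurd hi (by omega))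
    have h := vac_run b l 0 L 0 le_rfl (by positivity) (by simp [carrier]) hv
    rw [Nat.zero_add] at h
    rw [Esum, Finset.range_eq_Ico, h.2]
    simp
  · obtain ⟨M, rfl⟩ : ∃ M, N = M + 1 := ⟨N - 1, by omega⟩
    obtain ⟨hc, hs⟩ := main M (by omega)
    have hsolrun := sol_run b l (a M) (μ M) hc (hsolb M (by omega))
    have hend : a M + μ M ≤ L := hin M (by omega)
    have hv : ∀ j, a M + μ M ≤ j → j < (a M + μ M) + (L - (a M + μ M)) → b j = (1, 0) := by
      intro j h1 _
      refine hvacb j (fun i' hi' => Or.inr ?_)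
      have := amono i' M (by omega) (by omega)
      omega
    have hvacrun := vac_run b l (a M + μ M) (L - (a M + μ M)) (min (μ M : ℤ) l)
      (by omega) (by omega) hsolrun.1 hv
    rw [show (a M + μ M) + (L - (a M + μ M)) = L by omega] at hvacrun
    rw [Esum, Finset.range_eq_Ico,
        ← Finset.sum_Ico_consecutive _ (Nat.zero_le (a M + μ M)) hend,
        ← Finset.sum_Ico_consecutive _ (Nat.zero_le (a M)) (by omega : a M ≤ a M + μ M),
        hs, hsolrun.2, hvacrun.2, Finset.sum_range_succ]
    ring

/-- for a path `b ∈ B₁^{⊗L}` containing well-separated solitons of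
lengths `μ₀ ≥ μ₁ ≥ ⋯ ≥ μ_{N-1}` (soliton `i` occupies positions
`[aᵢ, aᵢ + μᵢ)`, with the separation `a_{i+1} ≥ aᵢ + 2μᵢ + μ_{i+1}`, solitons
ordered left to right with weakly decreasing lengths, all within `[0, L)`),
the conserved quantities are `E_l(b) = ∑ᵢ min(μᵢ, l)` for every `l ≥ 1`. -/
theorem conserved_quantity_of_separated_solitons
    (L N : ℕ) (a μ : ℕ → ℕ) (b : ℕ → ℤ × ℤ)
    (hμpos : ∀ i < N, 0 < μ i)
    (hdec : ∀ i, i + 1 < N → μ (i + 1) ≤ μ i)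
    (hsep : ∀ i, i + 1 < N → a i + 2 * μ i + μ (i + 1) ≤ a (i + 1))
    (hin : ∀ i < N, a i + μ i ≤ L)
    (hb : ∀ j : ℕ, b j = if ∃ i < N, a i ≤ j ∧ j < a i + μ i
      then ((0 : ℤ), (1 : ℤ)) else ((1 : ℤ), (0 : ℤ))) :
    ∀ l : ℕ, 1 ≤ l →
      Esum b L l = ∑ i ∈ Finset.range N, min (μ i : ℤ) (l : ℤ) :=
  conserved_quantity_of_separated_solitons' L N a μ b hμpos hdec hsep hin hb
end
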